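/- Fix an integer n ≥ 2 and a real number γ with 1 − cos(2γ)^{2n−2} ≠ 0. Then a real number β is a critical point of the map β ↦ f_n(γ,β) (i.e., ∂f_n/∂β(γ,β) = 0) with cos(4β) ≠ 0 if and only if tan(4β) = 4·sin(γ)·cos(γ)^{2n−2} / (1 − cos(2γ)^{2n−2}). -/

import Mathlib

open Real

/-- The deviation from `1/2` of the per-edge expectation value of the level-1 QAOA
for MAX-CUT on the complete graph `K_{2n}`. -/
noncomputable def qaoaF (n : ℕ) (γ β : ℝ) : ℝ :=
  (1 / 2) * sin (4 * β) * sin γ * cos γ ^ (2 * n - 2)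
    - (1 / 4) * sin (2 * β) ^ 2 * (1 - cos (2 * γ) ^ (2 * n - 2))

/-- For `n ≥ 2` and `γ` with `1 - cos(2γ)^{2n-2} ≠ 0`, a real `β` is a critical point of
`β ↦ f_n(γ,β)` with `cos(4β) ≠ 0` if and only if
`tan(4β) = 4·sin(γ)·cos(γ)^{2n-2} / (1 - cos(2γ)^{2n-2})`. -/
theorem qaoaF_critical_point_iff (n : ℕ) (hn : 2 ≤ n) (γ : ℝ)
    (hγ : 1 - cos (2 * γ) ^ (2 * n - 2) ≠ 0) (β : ℝ) :
    (deriv (fun b => qaoaF n γ b) β = 0 ∧ cos (4 * β) ≠ 0) ↔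
      tan (4 * β)
        = 4 * sin γ * cos γ ^ (2 * n - 2) / (1 - cos (2 * γ) ^ (2 * n - 2)) := by
  have hkeven : 2 * n - 2 = 2 * (n - 1) := by omega
  -- sin γ ≠ 0
  have hsγ : sin γ ≠ 0 := by
    intro h
    apply hγ
    have hcos2 : cos γ ^ 2 = 1 := by nlinarith [sin_sq_add_cos_sq γ]
    have : cos (2 * γ) = 1 := by rw [cos_two_mul]; nlinarith
    rw [this, one_pow]; ring
  have hcγ : cos γ ≠ 0 := by
    intro h
    apply hγ
    have : cos (2 * γ) = -1 := by rw [cos_two_mul, h]; ring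
    rw [this, hkeven, pow_mul, neg_one_sq, one_pow]; ring
  have hA : sin γ * cos γ ^ (2 * n - 2) ≠ 0 := mul_ne_zero hsγ (pow_ne_zero _ hcγ)
  -- derivative
  have hA4 : HasDerivAt (fun b : ℝ => 4 * b) 4 β := by
    simpa using (hasDerivAt_id β).const_mul (4 : ℝ)
  have hA2 : HasDerivAt (fun b : ℝ => 2 * b) 2 β := by
    simpa using (hasDerivAt_id β).const_mul (2 : ℝ)
  have hs4 : HasDerivAt (fun b : ℝ => sin (4 * b)) (cos (4 * β) * 4) β :=
    (Real.hasDerivAt_sin (4 * β)).comp β hA4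
  have hs2 : HasDerivAt (fun b : ℝ => sin (2 * b)) (cos (2 * β) * 2) β :=
    (Real.hasDerivAt_sin (2 * β)).comp β hA2
  have hsq : HasDerivAt (fun b : ℝ => sin (2 * b) ^ 2)
      ((2 : ℕ) * sin (2 * β) ^ 1 * (cos (2 * β) * 2)) β := hs2.pow 2
  have hD0 :=
    (((hs4.const_mul (1 / 2)).mul_const (sin γ)).mul_const (cos γ ^ (2 * n - 2))).sub
      ((hsq.const_mul (1 / 4)).mul_const (1 - cos (2 * γ) ^ (2 * n - 2)))
  simp only [qaoaF]
  rw [show deriv (fun b => 1 / 2 * sin (4 * b) * sin γ * cos γ ^ (2 * n - 2) - 1 / 4 * sin (2 * b) ^ 2 * (1 - cos (2 * γ) ^ (2 * n - 2))) β = _ from hD0.deriv]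
  have h24 : sin (4 * β) = 2 * sin (2 * β) * cos (2 * β) := by
    rw [show (4 : ℝ) * β = 2 * (2 * β) by ring, sin_two_mul]
  constructor
  · rintro ⟨hd, hc⟩
    rw [tan_eq_sin_div_cos, div_eq_div_iff hc hγ]
    push_cast at hd
    linear_combination (1 - cos (2 * γ) ^ (2 * n - 2)) * h24 - 2 * hd
  · intro ht
    have hc : cos (4 * β) ≠ 0 := by
      intro h
      rw [tan_eq_sin_div_cos, h, div_zero] at ht
      have h0 : 4 * sin γ * cos γ ^ (2 * n - 2) = 0 ∨
          1 - cos (2 * γ) ^ (2 * n - 2) = 0 := div_eq_zero_iff.1 ht.symm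
      rcases h0 with h0 | h0
      · exact hA (by linarith)
      · exact hγ h0
    refine ⟨?_, hc⟩
    rw [tan_eq_sin_div_cos, div_eq_div_iff hc hγ] at ht
    push_cast
    linear_combination (1 / 2) * (1 - cos (2 * γ) ^ (2 * n - 2)) * h24 - (1 / 2) * ht
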